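/- Let π be a probability measure on ℝ^d × ℝ^d such that the coordinate functions (x, y) ↦ x and (x, y) ↦ y are square-integrable with respect to π. Let μ = ∫ x dπ(x,y) and μ̃ = ∫ y dπ(x,y), and let Σ and Σ̃ be the covariance matrices of the two marginals, with entries Σ_{ij} = ∫ (x_i − μ_i)(x_j − μ_j) dπ and Σ̃_{ij} = ∫ (y_i − μ̃_i)(y_j − μ̃_j) dπ. Then ∫ ‖x − y‖² dπ(x,y) ≥ ‖μ − μ̃‖² + tr(Σ) + tr(Σ̃) − 2·tr((Σ̃^{1/2}·Σ·Σ̃^{1/2})^{1/2}), where ‖·‖ is the Euclidean norm on ℝ^d. -/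

import Mathlib

open MeasureTheory Matrix
open scoped Classical

/-- The unique positive semidefinite square root of a positive semidefinite real matrix
(junk value `0` if the matrix is not positive semidefinite). -/
noncomputable def psdSqrt {d : ℕ} (A : Matrix (Fin d) (Fin d) ℝ) : Matrix (Fin d) (Fin d) ℝ :=
  if h : A.PosSemidef then
    (h.1.eigenvectorUnitary : Matrix (Fin d) (Fin d) ℝ) * diagonal (Real.sqrt ∘ h.1.eigenvalues) *
      (star h.1.eigenvectorUnitary : Matrix (Fin d) (Fin d) ℝ) else 0

namespace GelbrichAux

variable {d : ℕ}


open scoped MatrixOrder in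
lemma psdSqrt_spec {A : Matrix (Fin d) (Fin d) ℝ} (h : A.PosSemidef) : psdSqrt A = CFC.sqrt A := by
  rw [CFC.sqrt_eq_cfc, cfc_nnreal_eq_real _ A h.nonneg, h.1.cfc_eq, psdSqrt, dif_pos h,
    IsHermitian.cfc, Unitary.conjStarAlgAut_apply]
  congr 3
  funext i
  simp [Real.sqrt_eq_zero', le_max_iff]
  rw [max_eq_left (h.eigenvalues_nonneg i)]

open scoped MatrixOrder in
lemma psdSqrt_posSemidef {A : Matrix (Fin d) (Fin d) ℝ} (h : A.PosSemidef) : (psdSqrt A).PosSemidef := by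
  rw [psdSqrt_spec h]; exact (CFC.sqrt_nonneg A).posSemidef

open scoped MatrixOrder in
lemma psdSqrt_mul_self {A : Matrix (Fin d) (Fin d) ℝ} (h : A.PosSemidef) : psdSqrt A * psdSqrt A = A := by
  rw [psdSqrt_spec h]; exact CFC.sqrt_mul_sqrt_self A h.nonneg

open scoped MatrixOrder in
lemma psdSqrt_eq {A N : Matrix (Fin d) (Fin d) ℝ} (hA : A.PosSemidef) (hN : N.PosSemidef) (h : N * N = A) :
    psdSqrt A = N := by
  rw [psdSqrt_spec hA]
  exact CFC.sqrt_unique h hN.nonneg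

lemma herm_transpose {A : Matrix (Fin d) (Fin d) ℝ} (hA : A.IsHermitian) : Aᵀ = A := by
  simpa [Matrix.IsSymm] using hA

lemma psd_quad {A : Matrix (Fin d) (Fin d) ℝ} (h : A.PosSemidef) (x : Fin d → ℝ) : 0 ≤ x ⬝ᵥ A *ᵥ x := by
  simpa using h.dotProduct_mulVec_nonneg x

lemma pd_quad {A : Matrix (Fin d) (Fin d) ℝ} (h : A.PosDef) {x : Fin d → ℝ} (hx : x ≠ 0) : 0 < x ⬝ᵥ A *ᵥ x := by
  simpa using h.dotProduct_mulVec_pos hx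

lemma psd_mk {A : Matrix (Fin d) (Fin d) ℝ} (hH : A.IsHermitian) (h : ∀ x, 0 ≤ x ⬝ᵥ A *ᵥ x) : A.PosSemidef :=
  PosSemidef.of_dotProduct_mulVec_nonneg hH fun x => by simpa using h x

lemma pd_mk {A : Matrix (Fin d) (Fin d) ℝ} (hH : A.IsHermitian) (h : ∀ x, x ≠ 0 → 0 < x ⬝ᵥ A *ᵥ x) : A.PosDef :=
  PosDef.of_dotProduct_mulVec_pos hH fun x hx => by simpa using h x hx

lemma psd_quad_zero {A : Matrix (Fin d) (Fin d) ℝ} (h : A.PosSemidef) {x : Fin d → ℝ}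
    (hx : x ⬝ᵥ A *ᵥ x = 0) : A *ᵥ x = 0 := by
  rw [← h.dotProduct_mulVec_zero_iff x]
  simpa using hx

lemma dot_sym {A : Matrix (Fin d) (Fin d) ℝ} (hA : A.IsHermitian) (x y : Fin d → ℝ) :
    x ⬝ᵥ A *ᵥ y = (A *ᵥ x) ⬝ᵥ y := by
  rw [Matrix.dotProduct_mulVec, ← herm_transpose hA, Matrix.vecMul_transpose,
    herm_transpose hA]



noncomputable def fn {A : Matrix (Fin d) (Fin d) ℝ} (hA : A.IsHermitian) (g : ℝ → ℝ) :
    Matrix (Fin d) (Fin d) ℝ :=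
  (hA.eigenvectorUnitary : Matrix (Fin d) (Fin d) ℝ) * diagonal (g ∘ hA.eigenvalues) *
    star (hA.eigenvectorUnitary : Matrix (Fin d) (Fin d) ℝ)

variable {A : Matrix (Fin d) (Fin d) ℝ} (hA : A.IsHermitian)

lemma u_star_mul :
    star (hA.eigenvectorUnitary : Matrix (Fin d) (Fin d) ℝ) *
      (hA.eigenvectorUnitary : Matrix (Fin d) (Fin d) ℝ) = 1 :=
  Matrix.mem_unitaryGroup_iff'.mp (hA.eigenvectorUnitary).2

lemma u_mul_star :
    (hA.eigenvectorUnitary : Matrix (Fin d) (Fin d) ℝ) *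
      star (hA.eigenvectorUnitary : Matrix (Fin d) (Fin d) ℝ) = 1 :=
  Matrix.mem_unitaryGroup_iff.mp (hA.eigenvectorUnitary).2

lemma fn_mul (g h : ℝ → ℝ) : fn hA g * fn hA h = fn hA (fun x => g x * h x) := by
  unfold fn
  simp only [mul_assoc]
  rw [← mul_assoc (star _) _ _, u_star_mul hA, one_mul, ← mul_assoc (diagonal _) _ _,
    diagonal_mul_diagonal]
  rfl

lemma fn_congr {g h : ℝ → ℝ} (hg : ∀ i, g (hA.eigenvalues i) = h (hA.eigenvalues i)) :
    fn hA g = fn hA h := by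
  unfold fn
  congr 2
  exact congrArg _ (funext fun i => hg i)

lemma fn_id : fn hA id = A := by
  unfold fn
  have := hA.spectral_theorem
  rw [RCLike.ofReal_real_eq_id] at this
  exact this.symm

lemma fn_const (c : ℝ) : fn hA (fun _ => c) = c • 1 := by
  unfold fn
  have h1 : diagonal ((fun _ => c) ∘ hA.eigenvalues) = c • (1 : Matrix (Fin d) (Fin d) ℝ) := by
    rw [Matrix.smul_one_eq_diagonal]
    rfl
  rw [h1, Matrix.mul_smul, Matrix.smul_mul, mul_one, u_mul_star hA]

lemma fn_add (g h : ℝ → ℝ) : fn hA g + fn hA h = fn hA (fun x => g x + h x) := by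
  unfold fn
  rw [← add_mul, ← mul_add, diagonal_add]
  rfl

lemma fn_sub (g h : ℝ → ℝ) : fn hA g - fn hA h = fn hA (fun x => g x - h x) := by
  unfold fn
  rw [← sub_mul, ← mul_sub, diagonal_sub]
  rfl

lemma fn_herm (g : ℝ → ℝ) : (fn hA g).IsHermitian := by
  unfold fn
  unfold Matrix.IsHermitian
  rw [Matrix.conjTranspose_mul, Matrix.conjTranspose_mul, Matrix.diagonal_conjTranspose,
    Matrix.star_eq_conjTranspose, Matrix.conjTranspose_conjTranspose, mul_assoc]
  simp [star_trivial]

lemma fn_posSemidef {g : ℝ → ℝ} (hg : ∀ i, 0 ≤ g (hA.eigenvalues i)) :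
    (fn hA g).PosSemidef := by
  have hdiag : (diagonal (g ∘ hA.eigenvalues) : Matrix (Fin d) (Fin d) ℝ).PosSemidef :=
    Matrix.PosSemidef.diagonal (fun i => hg i)
  have := hdiag.mul_mul_conjTranspose_same (hA.eigenvectorUnitary : Matrix (Fin d) (Fin d) ℝ)
  rw [← Matrix.star_eq_conjTranspose] at this
  exact this

lemma fn_trace (g : ℝ → ℝ) : (fn hA g).trace = ∑ i, g (hA.eigenvalues i) := by
  unfold fn
  rw [Matrix.trace_mul_cycle, u_star_mul hA, one_mul, Matrix.trace_diagonal]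
  rfl

lemma trace_eq_sum_eigen : A.trace = ∑ i, hA.eigenvalues i := by
  conv_lhs => rw [← fn_id hA]
  exact fn_trace hA id


lemma dot_sym' {A : Matrix (Fin d) (Fin d) ℝ} (hA : A.IsHermitian) (x y : Fin d → ℝ) :
    x ⬝ᵥ A *ᵥ y = y ⬝ᵥ A *ᵥ x := by
  rw [dot_sym hA, dotProduct_comm]

lemma sqrt_add_le {a b : ℝ} (ha : 0 ≤ a) (hb : 0 ≤ b) :
    Real.sqrt (a + b) ≤ Real.sqrt a + Real.sqrt b := by
  rw [← Real.sqrt_sq (by positivity : (0:ℝ) ≤ Real.sqrt a + Real.sqrt b)]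
  apply Real.sqrt_le_sqrt
  nlinarith [Real.sq_sqrt ha, Real.sq_sqrt hb, Real.sqrt_nonneg a, Real.sqrt_nonneg b]

lemma quad_single (A : Matrix (Fin d) (Fin d) ℝ) (i : Fin d) :
    (Pi.single i 1 : Fin d → ℝ) ⬝ᵥ A *ᵥ (Pi.single i 1 : Fin d → ℝ) = A i i := by
  simp [dotProduct, Matrix.mulVec, Pi.single_apply, mul_ite, ite_mul,
    Finset.sum_ite_eq, Finset.sum_ite_eq']

lemma trace_nonneg_psd {A : Matrix (Fin d) (Fin d) ℝ} (h : A.PosSemidef) : 0 ≤ A.trace := by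
  rw [Matrix.trace]
  apply Finset.sum_nonneg
  intro i _
  have := psd_quad h (Pi.single i 1)
  rwa [quad_single] at this

lemma trace_le_of_loewner {A B : Matrix (Fin d) (Fin d) ℝ} (h : (B - A).PosSemidef) :
    A.trace ≤ B.trace := by
  have := trace_nonneg_psd h
  rw [Matrix.trace_sub] at this
  linarith

lemma conj_psd {A R : Matrix (Fin d) (Fin d) ℝ} (hA : A.PosSemidef) (hR : R.IsHermitian) :
    (R * A * R).PosSemidef := by
  have := hA.mul_mul_conjTranspose_same R
  rwa [hR] at this

lemma trace_mul_psd_nonneg {A B : Matrix (Fin d) (Fin d) ℝ} (hA : A.PosSemidef)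
    (hB : B.PosSemidef) : 0 ≤ (A * B).trace := by
  rw [← psdSqrt_mul_self hB, ← mul_assoc, Matrix.trace_mul_cycle]
  exact trace_nonneg_psd (conj_psd hA (psdSqrt_posSemidef hB).1)

lemma quad_le_trace {A : Matrix (Fin d) (Fin d) ℝ} (hA : A.PosSemidef) (v : Fin d → ℝ) :
    v ⬝ᵥ A *ᵥ v ≤ A.trace * (v ⬝ᵥ v) := by
  obtain ⟨c, hcc, hc⟩ : ∃ c : ℝ, c = A.trace ∧ c = ∑ i, hA.1.eigenvalues i :=
    ⟨A.trace, rfl, trace_eq_sum_eigen hA.1⟩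
  have hfn : (c • (1 : Matrix (Fin d) (Fin d) ℝ) - A).PosSemidef := by
    have h1 : fn hA.1 (fun x => c - x) = c • (1 : Matrix (Fin d) (Fin d) ℝ) - A := by
      have h2 := fn_sub hA.1 (fun _ => c) id
      rw [fn_const, fn_id] at h2
      simp only [id_eq] at h2
      exact h2.symm
    rw [← h1]
    apply fn_posSemidef
    intro i
    rw [sub_nonneg, hc]
    exact Finset.single_le_sum (fun j _ => hA.eigenvalues_nonneg j) (Finset.mem_univ i)
  have h0 := psd_quad hfn v
  rw [Matrix.sub_mulVec, Matrix.smul_mulVec, Matrix.one_mulVec, dotProduct_sub,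
    dotProduct_smul] at h0
  rw [← hcc]
  simp only [smul_eq_mul] at h0
  linarith

lemma smul_one_pd {t : ℝ} (ht : 0 < t) : (t • (1 : Matrix (Fin d) (Fin d) ℝ)).PosDef := by
  rw [Matrix.smul_one_eq_diagonal]
  exact Matrix.posDef_diagonal_iff.mpr fun i => ht

lemma conj_pd {A R : Matrix (Fin d) (Fin d) ℝ} (hA : A.PosDef) (hR : R.PosDef) :
    (R * A * R).PosDef := by
  apply pd_mk (conj_psd hA.posSemidef hR.1).1
  intro x hx
  have h1 : x ⬝ᵥ (R * A * R) *ᵥ x = (R *ᵥ x) ⬝ᵥ A *ᵥ (R *ᵥ x) := by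
    rw [← Matrix.mulVec_mulVec, ← Matrix.mulVec_mulVec, dot_sym hR.1]
  rw [h1]
  apply pd_quad hA
  intro h0
  have h2 := pd_quad hR hx
  rw [h0, dotProduct_zero] at h2
  exact lt_irrefl 0 h2

lemma sqrt_pd {P : Matrix (Fin d) (Fin d) ℝ} (hP : P.PosDef) : (psdSqrt P).PosDef := by
  have hps := psdSqrt_posSemidef hP.posSemidef
  apply pd_mk hps.1
  intro x hx
  rcases (psd_quad hps x).lt_or_eq with h | h
  · exact h
  · exfalso
    have h0 : psdSqrt P *ᵥ x = 0 := psd_quad_zero hps h.symm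
    have h1 : P *ᵥ x = 0 := by
      rw [← psdSqrt_mul_self hP.posSemidef, ← Matrix.mulVec_mulVec, h0, Matrix.mulVec_zero]
    have h2 := pd_quad hP hx
    rw [h1, dotProduct_zero] at h2
    exact lt_irrefl 0 h2

lemma pd_det_unit {A : Matrix (Fin d) (Fin d) ℝ} (hA : A.PosDef) : IsUnit A.det :=
  isUnit_iff_ne_zero.mpr hA.det_pos.ne'

lemma cs_bound {A : Matrix (Fin d) (Fin d) ℝ} (hA : A.PosSemidef) {c : ℝ} (hc : 0 < c)
    (v w : Fin d → ℝ) :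
    2 * (v ⬝ᵥ A *ᵥ w) ≤ c * (v ⬝ᵥ A *ᵥ v) + c⁻¹ * (w ⬝ᵥ A *ᵥ w) := by
  have h0 := psd_quad hA (c • v - w)
  have hexp : (c • v - w) ⬝ᵥ A *ᵥ (c • v - w)
      = c * c * (v ⬝ᵥ A *ᵥ v) - 2 * c * (v ⬝ᵥ A *ᵥ w) + (w ⬝ᵥ A *ᵥ w) := by
    have hsym : w ⬝ᵥ A *ᵥ v = v ⬝ᵥ A *ᵥ w := dot_sym' hA.1 w v
    rw [Matrix.mulVec_sub, Matrix.mulVec_smul, dotProduct_sub, sub_dotProduct,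
      sub_dotProduct, smul_dotProduct, smul_dotProduct, dotProduct_smul, dotProduct_smul,
      hsym]
    simp only [smul_eq_mul]
    ring
  rw [hexp] at h0
  have hinv : 0 < c⁻¹ := inv_pos.mpr hc
  have h1 : 0 ≤ c⁻¹ * (c * c * (v ⬝ᵥ A *ᵥ v) - 2 * c * (v ⬝ᵥ A *ᵥ w) + (w ⬝ᵥ A *ᵥ w)) :=
    mul_nonneg hinv.le h0
  have e1 : c⁻¹ * (c * c * (v ⬝ᵥ A *ᵥ v) - 2 * c * (v ⬝ᵥ A *ᵥ w) + (w ⬝ᵥ A *ᵥ w))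
      = c * (v ⬝ᵥ A *ᵥ v) - 2 * (v ⬝ᵥ A *ᵥ w) + c⁻¹ * (w ⬝ᵥ A *ᵥ w) := by
    field_simp
  rw [e1] at h1
  linarith

lemma two_dot_le {K : Matrix (Fin d) (Fin d) ℝ} (hK : K.PosDef) (a b : Fin d → ℝ) :
    2 * (a ⬝ᵥ b) ≤ a ⬝ᵥ K *ᵥ a + b ⬝ᵥ K⁻¹ *ᵥ b := by
  have hdu := pd_det_unit hK
  have h0 := psd_quad hK.posSemidef (a - K⁻¹ *ᵥ b)
  set z := K⁻¹ *ᵥ b with hzdef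
  have hz1 : K *ᵥ z = b := by
    rw [hzdef, Matrix.mulVec_mulVec, Matrix.mul_nonsing_inv _ hdu, Matrix.one_mulVec]
  have hexp : (a - z) ⬝ᵥ K *ᵥ (a - z)
      = a ⬝ᵥ K *ᵥ a - 2 * (a ⬝ᵥ b) + b ⬝ᵥ K⁻¹ *ᵥ b := by
    have e1 : z ⬝ᵥ K *ᵥ a = a ⬝ᵥ b := by rw [dot_sym' hK.1, hz1]
    have e2 : z ⬝ᵥ b = b ⬝ᵥ K⁻¹ *ᵥ b := by rw [dotProduct_comm, hzdef]
    rw [Matrix.mulVec_sub, dotProduct_sub, sub_dotProduct, sub_dotProduct, hz1, e1, e2]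
    ring
  rw [hexp] at h0
  linarith

lemma psdSqrt_mono {P Q : Matrix (Fin d) (Fin d) ℝ} (hP : P.PosSemidef) (hQ : Q.PosSemidef)
    (h : (Q - P).PosSemidef) : (psdSqrt Q - psdSqrt P).PosSemidef := by
  set S := psdSqrt P with hSdef
  set T := psdSqrt Q with hTdef
  have hS := psdSqrt_posSemidef hP
  have hT := psdSqrt_posSemidef hQ
  have hR : (T - S).IsHermitian := hT.1.sub hS.1
  refine hR.posSemidef_iff_eigenvalues_nonneg.mpr fun i => ?_
  by_contra hneg
  push_neg at hneg
  rw [Pi.zero_apply] at hneg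
  set lam := hR.eigenvalues i with hlam
  set v : Fin d → ℝ := ⇑(hR.eigenvectorBasis i) with hvdef
  have hv : (T - S) *ᵥ v = lam • v := hR.mulVec_eigenvectorBasis i
  have hvne : v ≠ 0 := by
    intro h0
    have := (hR.eigenvectorBasis).orthonormal.ne_zero i
    apply this
    ext j
    exact congrFun h0 j
  have hQP : Q - P = T * (T - S) + (T - S) * S := by
    rw [mul_sub, sub_mul, psdSqrt_mul_self hQ, psdSqrt_mul_self hP]
    rw [sub_add_sub_cancel]
  have h0 : 0 ≤ v ⬝ᵥ (Q - P) *ᵥ v := psd_quad h v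
  rw [hQP, Matrix.add_mulVec, dotProduct_add, ← Matrix.mulVec_mulVec, hv,
    Matrix.mulVec_smul, dotProduct_smul] at h0
  have e2 : v ⬝ᵥ ((T - S) * S) *ᵥ v = lam * (v ⬝ᵥ S *ᵥ v) := by
    rw [← Matrix.mulVec_mulVec, dot_sym hR, hv, smul_dotProduct]
    simp [smul_eq_mul]
  rw [e2] at h0
  simp only [smul_eq_mul] at h0
  have hTv := psd_quad hT v
  have hSv := psd_quad hS v
  have hsum0 : v ⬝ᵥ T *ᵥ v = 0 ∧ v ⬝ᵥ S *ᵥ v = 0 := by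
    constructor <;> nlinarith
  have hTv0 : T *ᵥ v = 0 := psd_quad_zero hT hsum0.1
  have hSv0 : S *ᵥ v = 0 := psd_quad_zero hS hsum0.2
  rw [Matrix.sub_mulVec, hTv0, hSv0, sub_zero] at hv
  have : lam • v = 0 := hv.symm
  rcases smul_eq_zero.mp this with h | h
  · exact hneg.ne h
  · exact hvne h

lemma smul_one_psd {t : ℝ} (ht : 0 ≤ t) : (t • (1 : Matrix (Fin d) (Fin d) ℝ)).PosSemidef := by
  rw [Matrix.smul_one_eq_diagonal]
  exact Matrix.PosSemidef.diagonal fun i => ht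

lemma sqrt_fn {B : Matrix (Fin d) (Fin d) ℝ} (hB : B.PosSemidef) :
    psdSqrt B = fn hB.1 Real.sqrt := by
  apply psdSqrt_eq hB (fn_posSemidef hB.1 fun i => Real.sqrt_nonneg _)
  rw [fn_mul]
  calc fn hB.1 (fun x => Real.sqrt x * Real.sqrt x)
      = fn hB.1 id := fn_congr hB.1 fun i => by
        simp [Real.mul_self_sqrt (hB.eigenvalues_nonneg i)]
    _ = B := fn_id hB.1

lemma shift_fn {B : Matrix (Fin d) (Fin d) ℝ} (hB : B.PosSemidef) (t : ℝ) :
    B + t • (1 : Matrix (Fin d) (Fin d) ℝ) = fn hB.1 (fun x => x + t) := by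
  have h2 := fn_add hB.1 id (fun _ => t)
  rw [fn_id, fn_const] at h2
  simp only [id_eq] at h2
  exact h2

lemma sqrt_shift {B : Matrix (Fin d) (Fin d) ℝ} (hB : B.PosSemidef) {t : ℝ} (ht : 0 ≤ t) :
    psdSqrt (B + t • 1) = fn hB.1 (fun x => Real.sqrt (x + t)) := by
  apply psdSqrt_eq (hB.add (smul_one_psd ht))
    (fn_posSemidef hB.1 (g := fun x => Real.sqrt (x + t)) fun i => Real.sqrt_nonneg _)
  rw [fn_mul, shift_fn hB t]
  apply fn_congr
  intro i
  have h0 : 0 ≤ hB.1.eigenvalues i + t := add_nonneg (hB.eigenvalues_nonneg i) ht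
  simp [Real.mul_self_sqrt h0]

lemma trace_sqrt_perturb {P : Matrix (Fin d) (Fin d) ℝ} (hP : P.PosSemidef) {δ : ℝ}
    (hδ : 0 ≤ δ) :
    (psdSqrt (P + δ • 1)).trace ≤ (psdSqrt P).trace + d * Real.sqrt δ := by
  rw [sqrt_shift hP hδ, sqrt_fn hP, fn_trace, fn_trace]
  calc (∑ i, Real.sqrt (hP.1.eigenvalues i + δ))
      ≤ ∑ i, (Real.sqrt (hP.1.eigenvalues i) + Real.sqrt δ) :=
        Finset.sum_le_sum fun i _ => sqrt_add_le (hP.eigenvalues_nonneg i) hδ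
    _ = (∑ i, Real.sqrt (hP.1.eigenvalues i)) + d * Real.sqrt δ := by
        rw [Finset.sum_add_distrib, Finset.sum_const, Finset.card_univ, Fintype.card_fin,
          nsmul_eq_mul]

lemma dot_self_nonneg (x : Fin d → ℝ) : 0 ≤ x ⬝ᵥ x :=
  Finset.sum_nonneg fun i _ => mul_self_nonneg _

/-- Loewner bound for the perturbed conjugated matrix. -/
lemma Pt_le {A B : Matrix (Fin d) (Fin d) ℝ} (hA : A.PosSemidef) (hB : B.PosSemidef)
    {t : ℝ} (ht : 0 < t) :
    ((psdSqrt B * A * psdSqrt B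
        + (A.trace * B.trace * Real.sqrt t + A.trace * Real.sqrt t + A.trace * t
            + t * (B.trace + d * t)) • 1)
      - (psdSqrt (B + t • 1) * (A + t • 1) * psdSqrt (B + t • 1))).PosSemidef := by
  set α := A.trace with hα
  set β := B.trace with hβ
  have hα0 : 0 ≤ α := trace_nonneg_psd hA
  have hβ0 : 0 ≤ β := trace_nonneg_psd hB
  set st := Real.sqrt t with hst
  have hst0 : 0 < st := Real.sqrt_pos.mpr ht
  have hsq : st * st = t := Real.mul_self_sqrt ht.le
  set δ := α * β * st + α * st + α * t + t * (β + d * t) with hδdef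
  set R := psdSqrt B with hR0
  set Rt := psdSqrt (B + t • 1) with hRt0
  have hBt : (B + t • (1 : Matrix (Fin d) (Fin d) ℝ)).PosSemidef := hB.add (smul_one_psd ht.le)
  have hAt : (A + t • (1 : Matrix (Fin d) (Fin d) ℝ)).PosSemidef := hA.add (smul_one_psd ht.le)
  have hR := psdSqrt_posSemidef hB
  have hRt := psdSqrt_posSemidef hBt
  set E := Rt - R with hEdef
  have hEfn : E = fn hB.1 (fun x => Real.sqrt (x + t) - Real.sqrt x) := by
    rw [hEdef, hRt0, hR0, sqrt_shift hB ht.le, sqrt_fn hB, fn_sub]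
  have hE2 : (t • (1 : Matrix (Fin d) (Fin d) ℝ) - E * E).PosSemidef := by
    have hc := fn_const hB.1 t
    rw [hEfn, fn_mul, ← hc, fn_sub]
    apply fn_posSemidef
    intro i
    have hl : 0 ≤ hB.1.eigenvalues i := hB.eigenvalues_nonneg i
    have s1 : Real.sqrt (hB.1.eigenvalues i + t) ≤ Real.sqrt (hB.1.eigenvalues i) + st :=
      sqrt_add_le hl ht.le
    have s2 : Real.sqrt (hB.1.eigenvalues i) ≤ Real.sqrt (hB.1.eigenvalues i + t) :=
      Real.sqrt_le_sqrt (by linarith)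
    have s4 := Real.sqrt_nonneg (hB.1.eigenvalues i)
    nlinarith [Real.sqrt_nonneg (hB.1.eigenvalues i + t)]
  have hEh : E.IsHermitian := hRt.1.sub hR.1
  have hPt : (Rt * (A + t • 1) * Rt).PosSemidef := conj_psd hAt hRt.1
  have hP : (R * A * R).PosSemidef := conj_psd hA hR.1
  have hδ0 : 0 ≤ δ := by
    rw [hδdef]
    have hdt : (0:ℝ) ≤ d * t := by positivity
    nlinarith [mul_nonneg (mul_nonneg hα0 hβ0) hst0.le, mul_nonneg hα0 hst0.le,
      mul_nonneg hα0 ht.le, mul_nonneg ht.le (add_nonneg hβ0 hdt)]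
  apply psd_mk
  · exact (hP.1.add (smul_one_psd hδ0).1).sub hPt.1
  · intro x
    have hx2 : 0 ≤ x ⬝ᵥ x := dot_self_nonneg x
    set u := Rt *ᵥ x with hu
    set v := R *ᵥ x with hv
    set w := E *ᵥ x with hw
    have huvw : u = v + w := by
      rw [hu, hv, hw, hEdef, ← Matrix.add_mulVec, add_sub_cancel]
    have e_main : x ⬝ᵥ (Rt * (A + t • 1) * Rt) *ᵥ x = u ⬝ᵥ A *ᵥ u + t * (u ⬝ᵥ u) := by
      rw [← Matrix.mulVec_mulVec, ← Matrix.mulVec_mulVec, dot_sym hRt.1, Matrix.add_mulVec,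
        dotProduct_add, Matrix.smul_mulVec, Matrix.one_mulVec, dotProduct_smul,
        smul_eq_mul]
    have e_P : x ⬝ᵥ (R * A * R) *ᵥ x = v ⬝ᵥ A *ᵥ v := by
      rw [← Matrix.mulVec_mulVec, ← Matrix.mulVec_mulVec, dot_sym hR.1]
    have e_vv : v ⬝ᵥ v = x ⬝ᵥ B *ᵥ x := by
      rw [hv, ← dot_sym hR.1 x (R *ᵥ x), Matrix.mulVec_mulVec, psdSqrt_mul_self hB]
    have bound_vv : v ⬝ᵥ v ≤ β * (x ⬝ᵥ x) := by rw [e_vv]; exact quad_le_trace hB x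
    have e_ww : w ⬝ᵥ w = x ⬝ᵥ (E * E) *ᵥ x := by
      rw [hw, ← dot_sym hEh x (E *ᵥ x), Matrix.mulVec_mulVec]
    have bound_ww : w ⬝ᵥ w ≤ t * (x ⬝ᵥ x) := by
      have h0 := psd_quad hE2 x
      rw [Matrix.sub_mulVec, Matrix.smul_mulVec, Matrix.one_mulVec, dotProduct_sub,
        dotProduct_smul, smul_eq_mul] at h0
      rw [e_ww]
      linarith
    have e_uu : u ⬝ᵥ u = x ⬝ᵥ (B + t • 1) *ᵥ x := by
      rw [hu, ← dot_sym hRt.1 x (Rt *ᵥ x), Matrix.mulVec_mulVec, psdSqrt_mul_self hBt]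
    have bound_uu : u ⬝ᵥ u ≤ (β + d * t) * (x ⬝ᵥ x) := by
      rw [e_uu]
      have := quad_le_trace hBt x
      rwa [Matrix.trace_add, Matrix.trace_smul, Matrix.trace_one, smul_eq_mul,
        Fintype.card_fin, mul_comm t (d:ℝ)] at this
    have expand_u : u ⬝ᵥ A *ᵥ u = v ⬝ᵥ A *ᵥ v + 2 * (v ⬝ᵥ A *ᵥ w) + w ⬝ᵥ A *ᵥ w := by
      rw [huvw, Matrix.mulVec_add, dotProduct_add, add_dotProduct, add_dotProduct,
        dot_sym' hA.1 w v]
      ring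
    have bound_cross : 2 * (v ⬝ᵥ A *ᵥ w) ≤ st * (v ⬝ᵥ A *ᵥ v) + st⁻¹ * (w ⬝ᵥ A *ᵥ w) :=
      cs_bound hA hst0 v w
    have bound_vAv : v ⬝ᵥ A *ᵥ v ≤ α * (β * (x ⬝ᵥ x)) :=
      le_trans (quad_le_trace hA v) (mul_le_mul_of_nonneg_left bound_vv hα0)
    have bound_wAw : w ⬝ᵥ A *ᵥ w ≤ α * (t * (x ⬝ᵥ x)) :=
      le_trans (quad_le_trace hA w) (mul_le_mul_of_nonneg_left bound_ww hα0)
    have wAw0 : 0 ≤ w ⬝ᵥ A *ᵥ w := psd_quad hA w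
    have h8 : st * (v ⬝ᵥ A *ᵥ v) ≤ st * (α * (β * (x ⬝ᵥ x))) :=
      mul_le_mul_of_nonneg_left bound_vAv hst0.le
    have h9 : st⁻¹ * (w ⬝ᵥ A *ᵥ w) ≤ st⁻¹ * (α * (t * (x ⬝ᵥ x))) :=
      mul_le_mul_of_nonneg_left bound_wAw (inv_nonneg.mpr hst0.le)
    have h10 : st⁻¹ * (α * (t * (x ⬝ᵥ x))) = α * st * (x ⬝ᵥ x) := by
      rw [← hsq]
      field_simp
    have h11 : t * (u ⬝ᵥ u) ≤ t * ((β + d * t) * (x ⬝ᵥ x)) :=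
      mul_le_mul_of_nonneg_left bound_uu ht.le
    -- final quad computation
    rw [Matrix.sub_mulVec, dotProduct_sub, Matrix.add_mulVec, dotProduct_add,
      Matrix.smul_mulVec, Matrix.one_mulVec, dotProduct_smul, smul_eq_mul,
      e_main, e_P, sub_nonneg, expand_u]
    nlinarith [h8, h9, h10, h11, bound_cross]

lemma gelbrich_matrix {A B : Matrix (Fin d) (Fin d) ℝ} (hA : A.PosSemidef) (hB : B.PosSemidef)
    {c : ℝ} (hc : ∀ K : Matrix (Fin d) (Fin d) ℝ, K.PosDef →
      2 * c ≤ (K * A).trace + (K⁻¹ * B).trace) :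
    c ≤ (psdSqrt (psdSqrt B * A * psdSqrt B)).trace := by
  set R := psdSqrt B with hRdef
  have hR := psdSqrt_posSemidef hB
  have hP : (R * A * R).PosSemidef := conj_psd hA hR.1
  set trM := (psdSqrt (R * A * R)).trace with htrM
  have hα0 := trace_nonneg_psd hA
  have hβ0 := trace_nonneg_psd hB
  have step : ∀ t : ℝ, 0 < t →
      c ≤ trM + d * Real.sqrt (A.trace * B.trace * Real.sqrt t + A.trace * Real.sqrt t
        + A.trace * t + t * (B.trace + d * t)) := by
    intro t ht
    set δ := A.trace * B.trace * Real.sqrt t + A.trace * Real.sqrt t + A.trace * t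
        + t * (B.trace + d * t) with hδdef
    have hδ0 : 0 ≤ δ := by
      have hdt : (0:ℝ) ≤ (d : ℝ) * t := by positivity
      have hst := Real.sqrt_nonneg t
      nlinarith [mul_nonneg (mul_nonneg hα0 hβ0) hst, mul_nonneg hα0 hst,
        mul_nonneg hα0 ht.le, mul_nonneg ht.le (add_nonneg hβ0 hdt)]
    have hAt : (A + t • (1 : Matrix (Fin d) (Fin d) ℝ)).PosDef :=
      Matrix.PosDef.posSemidef_add hA (smul_one_pd ht)
    have hBt : (B + t • (1 : Matrix (Fin d) (Fin d) ℝ)).PosDef :=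
      Matrix.PosDef.posSemidef_add hB (smul_one_pd ht)
    set Rt := psdSqrt (B + t • 1) with hRtdef
    have hRt : Rt.PosDef := sqrt_pd hBt
    have hRtRt : Rt * Rt = B + t • 1 := psdSqrt_mul_self hBt.posSemidef
    have hPt : (Rt * (A + t • 1) * Rt).PosDef := conj_pd hAt hRt
    set Mt := psdSqrt (Rt * (A + t • 1) * Rt) with hMtdef
    have hMt : Mt.PosDef := sqrt_pd hPt
    have hMtMt : Mt * Mt = Rt * (A + t • 1) * Rt := psdSqrt_mul_self hPt.posSemidef
    set K := Rt * Mt⁻¹ * Rt with hKdef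
    have hK : K.PosDef := conj_pd hMt.inv hRt
    have hRtu := pd_det_unit hRt
    have hMtu := pd_det_unit hMt
    have hKinv : K⁻¹ = Rt⁻¹ * Mt * Rt⁻¹ := by
      apply Matrix.inv_eq_right_inv
      calc Rt * Mt⁻¹ * Rt * (Rt⁻¹ * Mt * Rt⁻¹)
          = Rt * Mt⁻¹ * (Rt * Rt⁻¹) * (Mt * Rt⁻¹) := by simp only [Matrix.mul_assoc]
        _ = Rt * (Mt⁻¹ * Mt) * Rt⁻¹ := by
            rw [Matrix.mul_nonsing_inv _ hRtu]
            simp only [Matrix.mul_assoc, Matrix.one_mul]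
        _ = Rt * Rt⁻¹ := by rw [Matrix.nonsing_inv_mul _ hMtu, Matrix.mul_one]
        _ = 1 := Matrix.mul_nonsing_inv _ hRtu
    have hKA : (K * (A + t • 1)).trace = Mt.trace := by
      have e1 : K * (A + t • 1) = (Rt * Mt⁻¹) * (Rt * (A + t • 1)) := by
        rw [hKdef]; simp only [Matrix.mul_assoc]
      have e2 : (Rt * (A + t • 1)) * (Rt * Mt⁻¹) = Mt := by
        calc (Rt * (A + t • 1)) * (Rt * Mt⁻¹)
            = (Rt * (A + t • 1) * Rt) * Mt⁻¹ := by simp only [Matrix.mul_assoc]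
          _ = Mt * Mt * Mt⁻¹ := by rw [hMtMt]
          _ = Mt * (Mt * Mt⁻¹) := by simp only [Matrix.mul_assoc]
          _ = Mt := by rw [Matrix.mul_nonsing_inv _ hMtu, Matrix.mul_one]
      rw [e1, Matrix.trace_mul_comm, e2]
    have hKB : (K⁻¹ * (B + t • 1)).trace = Mt.trace := by
      have e1 : K⁻¹ * (B + t • 1) = (Rt⁻¹ * Mt) * (Rt⁻¹ * (Rt * Rt)) := by
        rw [hKinv, ← hRtRt]; simp only [Matrix.mul_assoc]
      have e2 : Rt⁻¹ * (Rt * Rt) = Rt := by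
        rw [← Matrix.mul_assoc, Matrix.nonsing_inv_mul _ hRtu, Matrix.one_mul]
      rw [e1, e2, Matrix.trace_mul_comm, ← Matrix.mul_assoc,
        Matrix.mul_nonsing_inv _ hRtu, Matrix.one_mul]
    have hKAle : (K * A).trace ≤ (K * (A + t • 1)).trace := by
      have e1 : K * (A + t • 1) = K * A + t • K := by
        rw [mul_add, Matrix.mul_smul, Matrix.mul_one]
      rw [e1, Matrix.trace_add, Matrix.trace_smul, smul_eq_mul]
      have h2 := trace_nonneg_psd hK.posSemidef
      nlinarith
    have hKBle : (K⁻¹ * B).trace ≤ (K⁻¹ * (B + t • 1)).trace := by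
      have e1 : K⁻¹ * (B + t • 1) = K⁻¹ * B + t • K⁻¹ := by
        rw [mul_add, Matrix.mul_smul, Matrix.mul_one]
      rw [e1, Matrix.trace_add, Matrix.trace_smul, smul_eq_mul]
      have h2 := trace_nonneg_psd hK.inv.posSemidef
      nlinarith
    have h2c : c ≤ Mt.trace := by
      have := hc K hK
      rw [← hKA, ← hKB] at *
      linarith [hKAle, hKBle, hc K hK]
    have hloew := Pt_le hA hB ht
    rw [← hδdef, ← hRdef, ← hRtdef] at hloew
    have hPδ : (R * A * R + δ • 1).PosSemidef := hP.add (smul_one_psd hδ0)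
    have h3 : Mt.trace ≤ (psdSqrt (R * A * R + δ • 1)).trace :=
      trace_le_of_loewner (psdSqrt_mono hPt.posSemidef hPδ hloew)
    have h4 := trace_sqrt_perturb hP hδ0
    rw [← htrM] at h4
    linarith
  -- limit t → 0⁺
  have hcont : Continuous (fun t : ℝ => trM + d * Real.sqrt (A.trace * B.trace * Real.sqrt t
      + A.trace * Real.sqrt t + A.trace * t + t * (B.trace + d * t))) := by
    apply continuous_const.add
    apply continuous_const.mul
    apply Real.continuous_sqrt.comp
    apply Continuous.add
    apply Continuous.add
    apply Continuous.add
    · exact (continuous_const.mul Real.continuous_sqrt)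
    · exact (continuous_const.mul Real.continuous_sqrt)
    · exact continuous_const.mul continuous_id
    · exact continuous_id.mul (continuous_const.add (continuous_const.mul continuous_id))
  have h0 : trM + (d : ℝ) * Real.sqrt (A.trace * B.trace * Real.sqrt 0 + A.trace * Real.sqrt 0
      + A.trace * 0 + 0 * (B.trace + d * 0)) = trM := by
    simp [Real.sqrt_zero]
  have htd : Filter.Tendsto (fun t : ℝ => trM + d * Real.sqrt (A.trace * B.trace * Real.sqrt t
      + A.trace * Real.sqrt t + A.trace * t + t * (B.trace + d * t)))
      (nhdsWithin 0 (Set.Ioi 0)) (nhds trM) := by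
    have := hcont.tendsto 0
    rw [h0] at this
    exact this.mono_left nhdsWithin_le_nhds
  exact ge_of_tendsto htd (eventually_nhdsWithin_of_forall fun t ht => step t ht)

lemma memLp_mul_integrable {α : Type*} [MeasurableSpace α] {μ : Measure α} {f g : α → ℝ}
    (hf : MemLp f 2 μ) (hg : MemLp g 2 μ) : Integrable (fun x => f x * g x) μ := by
  have h := MeasureTheory.L2.integrable_inner (𝕜 := ℝ) (hf.toLp f) (hg.toLp g)
  apply (integrable_congr ?_).mp h
  filter_upwards [hf.coeFn_toLp, hg.coeFn_toLp] with x hx hy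
  rw [hx, hy]
  simp [RCLike.inner_apply, conj_trivial]
  ring

lemma dot_mulVec_expand (K : Matrix (Fin d) (Fin d) ℝ) (a b : Fin d → ℝ) :
    a ⬝ᵥ K *ᵥ b = ∑ i, ∑ j, K i j * (a i * b j) := by
  simp only [dotProduct, Matrix.mulVec]
  refine Finset.sum_congr rfl fun i _ => ?_
  rw [Finset.mul_sum]
  refine Finset.sum_congr rfl fun j _ => ?_
  ring

lemma trace_mul_expand (K S : Matrix (Fin d) (Fin d) ℝ) (hsym : ∀ i j, S i j = S j i) :
    (K * S).trace = ∑ i, ∑ j, K i j * S i j := by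
  rw [Matrix.trace]
  refine Finset.sum_congr rfl fun i _ => ?_
  rw [Matrix.diag]
  rw [Matrix.mul_apply]
  exact Finset.sum_congr rfl fun j _ => by rw [hsym i j]

lemma integral_bilinear {α : Type*} [MeasurableSpace α] {μ : Measure α}
    (f g : Fin d → α → ℝ) (hfg : ∀ i j, Integrable (fun q => f i q * g j q) μ)
    (c : Fin d → Fin d → ℝ) :
    ∫ q, ∑ i, ∑ j, c i j * (f i q * g j q) ∂μ
      = ∑ i, ∑ j, c i j * ∫ q, f i q * g j q ∂μ := by
  rw [integral_finset_sum _ fun i _ =>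
    integrable_finset_sum _ fun j _ => (hfg i j).const_mul (c i j)]
  refine Finset.sum_congr rfl fun i _ => ?_
  rw [integral_finset_sum _ fun j _ => (hfg i j).const_mul (c i j)]
  exact Finset.sum_congr rfl fun j _ => integral_const_mul _ _

lemma euc_norm_sq (v : EuclideanSpace ℝ (Fin d)) : ‖v‖ ^ 2 = ∑ i, (v i) ^ 2 := by
  rw [EuclideanSpace.norm_eq, Real.sq_sqrt (Finset.sum_nonneg fun i _ => sq_nonneg _)]
  simp only [Real.norm_eq_abs, sq_abs]

end GelbrichAux


open GelbrichAux in
/-- **Gelbrich lower bound for the squared transport cost.**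
For a probability measure `π` on `ℝ^d × ℝ^d` with square-integrable coordinates, means
`μ, μ̃` and marginal covariance matrices `Σ, Σ̃`,
`∫ ‖x - y‖² dπ ≥ ‖μ - μ̃‖² + tr Σ + tr Σ̃ - 2 tr ((Σ̃^{1/2} Σ Σ̃^{1/2})^{1/2})`. -/
theorem integral_norm_sub_sq_ge_gelbrich
    {d : ℕ}
    (π : Measure (EuclideanSpace ℝ (Fin d) × EuclideanSpace ℝ (Fin d)))
    [IsProbabilityMeasure π]
    (h1 : MemLp (fun q => q.1) 2 π) (h2 : MemLp (fun q => q.2) 2 π)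
    (μ μt : EuclideanSpace ℝ (Fin d))
    (hμ : μ = ∫ q, q.1 ∂π) (hμt : μt = ∫ q, q.2 ∂π)
    (S St : Matrix (Fin d) (Fin d) ℝ)
    (hS : ∀ i j, S i j = ∫ q, (q.1 i - μ i) * (q.1 j - μ j) ∂π)
    (hSt : ∀ i j, St i j = ∫ q, (q.2 i - μt i) * (q.2 j - μt j) ∂π) :
    ∫ q, ‖q.1 - q.2‖ ^ 2 ∂π ≥
      ‖μ - μt‖ ^ 2 + S.trace + St.trace
        - 2 * (psdSqrt (psdSqrt St * S * psdSqrt St)).trace := by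
  classical
  have hx1 : ∀ i : Fin d,
      MemLp (fun q : EuclideanSpace ℝ (Fin d) × EuclideanSpace ℝ (Fin d) => q.1 i) 2 π := by
    intro i
    have h := (EuclideanSpace.proj i : EuclideanSpace ℝ (Fin d) →L[ℝ] ℝ).comp_memLp' h1
    exact h
  have hy1 : ∀ i : Fin d,
      MemLp (fun q : EuclideanSpace ℝ (Fin d) × EuclideanSpace ℝ (Fin d) => q.2 i) 2 π := by
    intro i
    have h := (EuclideanSpace.proj i : EuclideanSpace ℝ (Fin d) →L[ℝ] ℝ).comp_memLp' h2
    exact h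
  have hX2 : ∀ i, MemLp (fun q : EuclideanSpace ℝ (Fin d) × EuclideanSpace ℝ (Fin d) =>
      q.1 i - μ i) 2 π := fun i => (hx1 i).sub (memLp_const _)
  have hY2 : ∀ i, MemLp (fun q : EuclideanSpace ℝ (Fin d) × EuclideanSpace ℝ (Fin d) =>
      q.2 i - μt i) 2 π := fun i => (hy1 i).sub (memLp_const _)
  have hW2 : ∀ i, MemLp (fun q : EuclideanSpace ℝ (Fin d) × EuclideanSpace ℝ (Fin d) =>
      q.1 i - q.2 i) 2 π := fun i => (hx1 i).sub (hy1 i)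
  have hxx : ∀ i j, Integrable (fun q : EuclideanSpace ℝ (Fin d) × EuclideanSpace ℝ (Fin d) =>
      (q.1 i - μ i) * (q.1 j - μ j)) π := fun i j => memLp_mul_integrable (hX2 i) (hX2 j)
  have hyy : ∀ i j, Integrable (fun q : EuclideanSpace ℝ (Fin d) × EuclideanSpace ℝ (Fin d) =>
      (q.2 i - μt i) * (q.2 j - μt j)) π := fun i j => memLp_mul_integrable (hY2 i) (hY2 j)
  have hxy : ∀ i j, Integrable (fun q : EuclideanSpace ℝ (Fin d) × EuclideanSpace ℝ (Fin d) =>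
      (q.1 i - μ i) * (q.2 j - μt j)) π := fun i j => memLp_mul_integrable (hX2 i) (hY2 j)
  have hXint : ∀ i, Integrable (fun q : EuclideanSpace ℝ (Fin d) × EuclideanSpace ℝ (Fin d) =>
      q.1 i - μ i) π := fun i => (hX2 i).integrable one_le_two
  have hYint : ∀ i, Integrable (fun q : EuclideanSpace ℝ (Fin d) × EuclideanSpace ℝ (Fin d) =>
      q.2 i - μt i) π := fun i => (hY2 i).integrable one_le_two
  have hX0 : ∀ i, ∫ q, (q.1 i - μ i) ∂π = 0 := by
    intro i
    rw [integral_sub ((hx1 i).integrable one_le_two) (integrable_const _)]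
    rw [integral_const, probReal_univ, one_smul]
    have h1int : Integrable (fun q : EuclideanSpace ℝ (Fin d) × EuclideanSpace ℝ (Fin d) =>
        q.1) π := h1.integrable one_le_two
    have hcomm := (EuclideanSpace.proj i :
      EuclideanSpace ℝ (Fin d) →L[ℝ] ℝ).integral_comp_comm h1int
    have he : ∫ q, q.1 i ∂π = μ i := by
      rw [hμ]
      simpa using hcomm
    rw [he, sub_self]
  have hY0 : ∀ i, ∫ q, (q.2 i - μt i) ∂π = 0 := by
    intro i
    rw [integral_sub ((hy1 i).integrable one_le_two) (integrable_const _)]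
    rw [integral_const, probReal_univ, one_smul]
    have h2int : Integrable (fun q : EuclideanSpace ℝ (Fin d) × EuclideanSpace ℝ (Fin d) =>
        q.2) π := h2.integrable one_le_two
    have hcomm := (EuclideanSpace.proj i :
      EuclideanSpace ℝ (Fin d) →L[ℝ] ℝ).integral_comp_comm h2int
    have he : ∫ q, q.2 i ∂π = μt i := by
      rw [hμt]
      simpa using hcomm
    rw [he, sub_self]
  have hSsymm : ∀ i j, S i j = S j i := by
    intro i j
    rw [hS i j, hS j i]
    congr 1
    funext q
    ring
  have hStsymm : ∀ i j, St i j = St j i := by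
    intro i j
    rw [hSt i j, hSt j i]
    congr 1
    funext q
    ring
  have hSh : S.IsHermitian := by
    have : Sᴴ = S := by
      ext i j
      rw [Matrix.conjTranspose_apply, star_trivial]
      exact hSsymm j i
    exact this
  have hSth : St.IsHermitian := by
    have : Stᴴ = St := by
      ext i j
      rw [Matrix.conjTranspose_apply, star_trivial]
      exact hStsymm j i
    exact this
  have hSquad : ∀ u : Fin d → ℝ,
      u ⬝ᵥ S *ᵥ u = ∫ q, (∑ i, u i * (q.1 i - μ i)) ^ 2 ∂π := by
    intro u
    rw [dot_mulVec_expand]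
    have e2 : ∀ i j, S i j * (u i * u j)
        = (u i * u j) * ∫ q, (q.1 i - μ i) * (q.1 j - μ j) ∂π := fun i j => by
      rw [hS i j]; ring
    calc ∑ i, ∑ j, S i j * (u i * u j)
        = ∑ i, ∑ j, (u i * u j) * ∫ q, (q.1 i - μ i) * (q.1 j - μ j) ∂π :=
          Finset.sum_congr rfl fun i _ => Finset.sum_congr rfl fun j _ => e2 i j
      _ = ∫ q, ∑ i, ∑ j, (u i * u j) * ((q.1 i - μ i) * (q.1 j - μ j)) ∂π :=
          (integral_bilinear _ _ hxx _).symm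
      _ = ∫ q, (∑ i, u i * (q.1 i - μ i)) ^ 2 ∂π := by
          congr 1
          funext q
          rw [sq, Finset.sum_mul_sum]
          exact Finset.sum_congr rfl fun i _ => Finset.sum_congr rfl fun j _ => by ring
  have hStquad : ∀ u : Fin d → ℝ,
      u ⬝ᵥ St *ᵥ u = ∫ q, (∑ i, u i * (q.2 i - μt i)) ^ 2 ∂π := by
    intro u
    rw [dot_mulVec_expand]
    have e2 : ∀ i j, St i j * (u i * u j)
        = (u i * u j) * ∫ q, (q.2 i - μt i) * (q.2 j - μt j) ∂π := fun i j => by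
      rw [hSt i j]; ring
    calc ∑ i, ∑ j, St i j * (u i * u j)
        = ∑ i, ∑ j, (u i * u j) * ∫ q, (q.2 i - μt i) * (q.2 j - μt j) ∂π :=
          Finset.sum_congr rfl fun i _ => Finset.sum_congr rfl fun j _ => e2 i j
      _ = ∫ q, ∑ i, ∑ j, (u i * u j) * ((q.2 i - μt i) * (q.2 j - μt j)) ∂π :=
          (integral_bilinear _ _ hyy _).symm
      _ = ∫ q, (∑ i, u i * (q.2 i - μt i)) ^ 2 ∂π := by
          congr 1
          funext q
          rw [sq, Finset.sum_mul_sum]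
          exact Finset.sum_congr rfl fun i _ => Finset.sum_congr rfl fun j _ => by ring
  have hSpsd : S.PosSemidef := psd_mk hSh fun u => by
    rw [hSquad u]; exact integral_nonneg fun q => sq_nonneg _
  have hStpsd : St.PosSemidef := psd_mk hSth fun u => by
    rw [hStquad u]; exact integral_nonneg fun q => sq_nonneg _
  -- per-coordinate expansion of the squared difference
  have coord : ∀ i, ∫ q, (q.1 i - q.2 i) ^ 2 ∂π
      = S i i + St i i + (μ i - μt i) ^ 2
        - 2 * ∫ q, (q.1 i - μ i) * (q.2 i - μt i) ∂π := by
    intro i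
    have hptw : (fun q : EuclideanSpace ℝ (Fin d) × EuclideanSpace ℝ (Fin d) =>
        (q.1 i - q.2 i) ^ 2)
        = fun q => ((((q.1 i - μ i) * (q.1 i - μ i) + (q.2 i - μt i) * (q.2 i - μt i))
            - 2 * ((q.1 i - μ i) * (q.2 i - μt i)))
            + (2 * (μ i - μt i) * (q.1 i - μ i - (q.2 i - μt i)) + (μ i - μt i) ^ 2)) := by
      funext q
      ring
    have I1 : Integrable (fun q : EuclideanSpace ℝ (Fin d) × EuclideanSpace ℝ (Fin d) =>
        (q.1 i - μ i) * (q.1 i - μ i) + (q.2 i - μt i) * (q.2 i - μt i)) π :=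
      (hxx i i).add (hyy i i)
    have I2 : Integrable (fun q : EuclideanSpace ℝ (Fin d) × EuclideanSpace ℝ (Fin d) =>
        2 * ((q.1 i - μ i) * (q.2 i - μt i))) π := (hxy i i).const_mul 2
    have I3 : Integrable (fun q : EuclideanSpace ℝ (Fin d) × EuclideanSpace ℝ (Fin d) =>
        (q.1 i - μ i) * (q.1 i - μ i) + (q.2 i - μt i) * (q.2 i - μt i)
          - 2 * ((q.1 i - μ i) * (q.2 i - μt i))) π := I1.sub I2
    have I4 : Integrable (fun q : EuclideanSpace ℝ (Fin d) × EuclideanSpace ℝ (Fin d) =>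
        q.1 i - μ i - (q.2 i - μt i)) π := (hXint i).sub (hYint i)
    have I5 : Integrable (fun q : EuclideanSpace ℝ (Fin d) × EuclideanSpace ℝ (Fin d) =>
        2 * (μ i - μt i) * (q.1 i - μ i - (q.2 i - μt i))) π := I4.const_mul _
    have I6 : Integrable (fun q : EuclideanSpace ℝ (Fin d) × EuclideanSpace ℝ (Fin d) =>
        2 * (μ i - μt i) * (q.1 i - μ i - (q.2 i - μt i)) + (μ i - μt i) ^ 2) π :=
      I5.add (integrable_const _)
    rw [hptw]
    rw [integral_add I3 I6]
    rw [integral_sub I1 I2]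
    rw [integral_add (hxx i i) (hyy i i)]
    rw [integral_add I5 (integrable_const _)]
    rw [integral_const_mul, integral_const_mul]
    rw [integral_sub (hXint i) (hYint i), hX0 i, hY0 i]
    rw [integral_const, probReal_univ, one_smul]
    rw [← hS i i, ← hSt i i]
    ring
  have hW2' : ∀ i, Integrable (fun q : EuclideanSpace ℝ (Fin d) × EuclideanSpace ℝ (Fin d) =>
      (q.1 i - q.2 i) ^ 2) π := by
    intro i
    have h := memLp_mul_integrable (hW2 i) (hW2 i)
    have h' : (fun q : EuclideanSpace ℝ (Fin d) × EuclideanSpace ℝ (Fin d) =>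
        (q.1 i - q.2 i) ^ 2)
        = fun q => (q.1 i - q.2 i) * (q.1 i - q.2 i) := by
      funext q
      ring
    rw [h']
    exact h
  have hLHS1 : ∫ q, ‖q.1 - q.2‖ ^ 2 ∂π = ∑ i, ∫ q, (q.1 i - q.2 i) ^ 2 ∂π := by
    have hptw : (fun q : EuclideanSpace ℝ (Fin d) × EuclideanSpace ℝ (Fin d) =>
        ‖q.1 - q.2‖ ^ 2) = fun q => ∑ i, (q.1 i - q.2 i) ^ 2 := by
      funext q
      rw [euc_norm_sq]
      exact Finset.sum_congr rfl fun i _ => by rw [PiLp.sub_apply]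
    rw [hptw, integral_finset_sum _ fun i _ => hW2' i]
  have hμnorm : ‖μ - μt‖ ^ 2 = ∑ i, (μ i - μt i) ^ 2 := by
    rw [euc_norm_sq]
    exact Finset.sum_congr rfl fun i _ => by rw [PiLp.sub_apply]
  have htrS : S.trace = ∑ i, S i i := rfl
  have htrSt : St.trace = ∑ i, St i i := rfl
  have hmain : ∫ q, ‖q.1 - q.2‖ ^ 2 ∂π
      = ‖μ - μt‖ ^ 2 + S.trace + St.trace
        - 2 * ∑ i, ∫ q, (q.1 i - μ i) * (q.2 i - μt i) ∂π := by
    rw [hLHS1, hμnorm, htrS, htrSt]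
    rw [Finset.sum_congr rfl fun i _ => coord i]
    simp only [Finset.sum_sub_distrib, Finset.sum_add_distrib, Finset.mul_sum]
    ring
  -- the K-family inequality
  have hIneq : ∀ K : Matrix (Fin d) (Fin d) ℝ, K.PosDef →
      2 * (∑ i, ∫ q, (q.1 i - μ i) * (q.2 i - μt i) ∂π)
        ≤ (K * S).trace + (K⁻¹ * St).trace := by
    intro K hK
    have hptw : ∀ q : EuclideanSpace ℝ (Fin d) × EuclideanSpace ℝ (Fin d),
        2 * (∑ i, (q.1 i - μ i) * (q.2 i - μt i))
          ≤ (∑ i, ∑ j, K i j * ((q.1 i - μ i) * (q.1 j - μ j)))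
            + (∑ i, ∑ j, K⁻¹ i j * ((q.2 i - μt i) * (q.2 j - μt j))) := by
      intro q
      have h0 := two_dot_le hK (fun i => q.1 i - μ i) (fun i => q.2 i - μt i)
      rw [dot_mulVec_expand, dot_mulVec_expand] at h0
      exact h0
    have hint1 : Integrable (fun q : EuclideanSpace ℝ (Fin d) × EuclideanSpace ℝ (Fin d) =>
        2 * (∑ i, (q.1 i - μ i) * (q.2 i - μt i))) π :=
      (integrable_finset_sum _ fun i _ => hxy i i).const_mul 2
    have hint2a : Integrable (fun q : EuclideanSpace ℝ (Fin d) × EuclideanSpace ℝ (Fin d) =>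
        ∑ i, ∑ j, K i j * ((q.1 i - μ i) * (q.1 j - μ j))) π :=
      integrable_finset_sum _ fun i _ =>
        integrable_finset_sum _ fun j _ => (hxx i j).const_mul _
    have hint2b : Integrable (fun q : EuclideanSpace ℝ (Fin d) × EuclideanSpace ℝ (Fin d) =>
        ∑ i, ∑ j, K⁻¹ i j * ((q.2 i - μt i) * (q.2 j - μt j))) π :=
      integrable_finset_sum _ fun i _ =>
        integrable_finset_sum _ fun j _ => (hyy i j).const_mul _
    have hint2 : Integrable (fun q : EuclideanSpace ℝ (Fin d) × EuclideanSpace ℝ (Fin d) =>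
        (∑ i, ∑ j, K i j * ((q.1 i - μ i) * (q.1 j - μ j)))
          + (∑ i, ∑ j, K⁻¹ i j * ((q.2 i - μt i) * (q.2 j - μt j)))) π := hint2a.add hint2b
    have hmono := integral_mono hint1 hint2 hptw
    rw [integral_const_mul, integral_finset_sum _ fun i _ => hxy i i] at hmono
    rw [integral_add hint2a hint2b] at hmono
    rw [integral_bilinear _ _ hxx (fun i j => K i j),
      integral_bilinear _ _ hyy (fun i j => K⁻¹ i j)] at hmono
    rw [trace_mul_expand K S hSsymm, trace_mul_expand K⁻¹ St hStsymm]
    simp only [← hS, ← hSt] at hmono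
    exact hmono
  have hkey := gelbrich_matrix hSpsd hStpsd hIneq
  rw [ge_iff_le, hmain]
  linarith [hkey]
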